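/- The total number of quasi-shuffles (counted with multiplicity) of a list of length j with a list of length k equals the sum over r from 0 to min(j,k) of (j+k−r)! / (r! · (j−r)! · (k−r)!). -/

import Mathlib

open scoped Nat

/-- The multiset of quasi-shuffles (counted with multiplicity) of two lists over a
type with addition: at each step take the head of the first list, the head of the
second list, or merge (add) the two heads. -/
def qshuffles {A : Type*} [Add A] : List A → List A → Multiset (List A)
  | [], v => {v}
  | a :: u, [] => {a :: u}
  | a :: u, b :: v =>
      ((qshuffles u (b :: v)).map (a :: ·)) + ((qshuffles (a :: u) v).map (b :: ·)) +
        ((qshuffles u v).map ((a + b) :: ·))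
termination_by u v => u.length + v.length


lemma fact_aux0 (b c : ℕ) :
    ((b+c+2)! : ℚ)/((b+1)! * (c+1)!) =
      ((b+c+1)! : ℚ)/(b ! * (c+1)!) + ((b+c+1)! : ℚ)/((b+1)! * c !) := by
  rw [show b+c+2 = (b+c+1)+1 from rfl, Nat.factorial_succ (b+c+1),
    Nat.factorial_succ b, Nat.factorial_succ c]
  push_cast
  rw [div_add_div _ _ (by positivity) (by positivity), div_eq_div_iff (by positivity) (by positivity)]
  ring

lemma fact_aux (a b c : ℕ) :
    ((a+b+c+3)! : ℚ)/((a+1)! * (b+1)! * (c+1)!) =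
      ((a+b+c+2)! : ℚ)/((a+1)! * b ! * (c+1)!) + ((a+b+c+2)! : ℚ)/((a+1)! * (b+1)! * c !) +
      ((a+b+c+2)! : ℚ)/(a ! * (b+1)! * (c+1)!) := by
  rw [show a+b+c+3 = (a+b+c+2)+1 from rfl, Nat.factorial_succ (a+b+c+2),
    Nat.factorial_succ a, Nat.factorial_succ b, Nat.factorial_succ c]
  push_cast
  rw [div_add_div _ _ (by positivity) (by positivity), div_add_div _ _ (by positivity) (by positivity),
    div_eq_div_iff (by positivity) (by positivity)]
  ring

/-- extended summand, zero outside `r ≤ min j k` -/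
def qg (j k r : ℕ) : ℚ :=
  if r ≤ j ∧ r ≤ k then ((j + k - r)! : ℚ) / ((r)! * (j - r)! * (k - r)!) else 0

lemma qg_zero {j k r : ℕ} (h : ¬ (r ≤ j ∧ r ≤ k)) : qg j k r = 0 := if_neg h

lemma qg_eval {j k r : ℕ} (hj : r ≤ j) (hk : r ≤ k) :
    qg j k r = ((j + k - r)! : ℚ) / ((r)! * (j - r)! * (k - r)!) := if_pos ⟨hj, hk⟩

lemma sum_qg (j k n : ℕ) (hn : min j k < n) :
    ∑ r ∈ Finset.range n, qg j k r =
      ∑ r ∈ Finset.range (min j k + 1),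
        ((j + k - r)! : ℚ) / ((r)! * (j - r)! * (k - r)!) := by
  have h2 : ∑ r ∈ Finset.Ico (min j k + 1) n, qg j k r = 0 :=
    Finset.sum_eq_zero fun r hr => qg_zero (by simp only [Finset.mem_Ico] at hr; omega)
  rw [← Finset.sum_range_add_sum_Ico _ (by omega : min j k + 1 ≤ n), h2, add_zero]
  exact Finset.sum_congr rfl fun r hr => by
    simp only [Finset.mem_range] at hr
    exact qg_eval (by omega) (by omega)

lemma qg_rec (j k r : ℕ) :
    qg (j+1) (k+1) r = qg j (k+1) r + qg (j+1) k r +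
      (if r = 0 then 0 else qg j k (r-1)) := by
  rcases r with _ | s
  · rw [if_pos rfl, add_zero, qg_eval (Nat.zero_le _) (Nat.zero_le _),
      qg_eval (Nat.zero_le _) (Nat.zero_le _), qg_eval (Nat.zero_le _) (Nat.zero_le _)]
    simp only [Nat.sub_zero, Nat.factorial_zero, Nat.cast_one, one_mul]
    rw [show j+1+(k+1) = j+k+2 from by omega, show j+(k+1) = j+k+1 from rfl,
      show j+1+k = j+k+1 from by omega]
    exact fact_aux0 j k
  · rw [if_neg (Nat.succ_ne_zero s), Nat.succ_sub_one]
    by_cases hj : s + 1 ≤ j <;> by_cases hk : s + 1 ≤ k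
    · obtain ⟨b, rfl⟩ : ∃ b, j = s + 1 + b := ⟨j - (s+1), by omega⟩
      obtain ⟨c, rfl⟩ : ∃ c, k = s + 1 + c := ⟨k - (s+1), by omega⟩
      rw [qg_eval (j := s+1+b+1) (k := s+1+c+1) (r := s+1) (by omega) (by omega),
          qg_eval (j := s+1+b) (k := s+1+c+1) (r := s+1) (by omega) (by omega),
          qg_eval (j := s+1+b+1) (k := s+1+c) (r := s+1) (by omega) (by omega),
          qg_eval (j := s+1+b) (k := s+1+c) (r := s) (by omega) (by omega),
          show s+1+b+1 + (s+1+c+1) - (s+1) = s+b+c+3 from by omega,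
          show s+1+b + (s+1+c+1) - (s+1) = s+b+c+2 from by omega,
          show s+1+b+1 + (s+1+c) - (s+1) = s+b+c+2 from by omega,
          show s+1+b + (s+1+c) - s = s+b+c+2 from by omega,
          show s+1+b+1 - (s+1) = b+1 from by omega,
          show s+1+c+1 - (s+1) = c+1 from by omega,
          show s+1+b - (s+1) = b from by omega,
          show s+1+c - (s+1) = c from by omega,
          show s+1+b - s = b+1 from by omega,
          show s+1+c - s = c+1 from by omega]
      exact fact_aux s b c
    · -- s + 1 ≤ j, k ≤ s
      by_cases hsk : s = k
      · subst hsk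
        obtain ⟨b, rfl⟩ : ∃ b, j = s + 1 + b := ⟨j - (s+1), by omega⟩
        rw [qg_eval (j := s+1+b+1) (k := s+1) (r := s+1) (by omega) (by omega),
            qg_eval (j := s+1+b) (k := s+1) (r := s+1) (by omega) (by omega),
            qg_zero (j := s+1+b+1) (k := s) (r := s+1) (by omega),
            qg_eval (j := s+1+b) (k := s) (r := s) (by omega) (by omega),
            show s+1+b+1 + (s+1) - (s+1) = s+b+2 from by omega,
            show s+1+b + (s+1) - (s+1) = s+b+1 from by omega,
            show s+1+b + s - s = s+b+1 from by omega,
            show s+1+b+1 - (s+1) = b+1 from by omega,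
            show s+1 - (s+1) = 0 from by omega,
            show s+1+b - (s+1) = b from by omega,
            show s+1+b - s = b+1 from by omega,
            show s - s = 0 from by omega]
        simp only [Nat.factorial_zero, Nat.cast_one, mul_one]
        rw [fact_aux0 s b]; ring
      · rw [qg_zero (by omega), qg_zero (by omega), qg_zero (by omega), qg_zero (by omega)]
        ring
    · -- j ≤ s, s + 1 ≤ k
      by_cases hsj : s = j
      · subst hsj
        obtain ⟨c, rfl⟩ : ∃ c, k = s + 1 + c := ⟨k - (s+1), by omega⟩
        rw [qg_eval (j := s+1) (k := s+1+c+1) (r := s+1) (by omega) (by omega),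
            qg_zero (j := s) (k := s+1+c+1) (r := s+1) (by omega),
            qg_eval (j := s+1) (k := s+1+c) (r := s+1) (by omega) (by omega),
            qg_eval (j := s) (k := s+1+c) (r := s) (by omega) (by omega),
            show s+1 + (s+1+c+1) - (s+1) = s+c+2 from by omega,
            show s+1 + (s+1+c) - (s+1) = s+c+1 from by omega,
            show s + (s+1+c) - s = s+c+1 from by omega,
            show s+1 - (s+1) = 0 from by omega,
            show s+1+c+1 - (s+1) = c+1 from by omega,
            show s+1+c - (s+1) = c from by omega,
            show s+1+c - s = c+1 from by omega,
            show s - s = 0 from by omega]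
        simp only [Nat.factorial_zero, Nat.cast_one, mul_one, one_mul]
        rw [fact_aux0 s c]; ring
      · rw [qg_zero (by omega), qg_zero (by omega), qg_zero (by omega), qg_zero (by omega)]
        ring
    · -- j ≤ s, k ≤ s
      by_cases hsjk : s = j ∧ s = k
      · obtain ⟨rfl, rfl⟩ : s = j ∧ s = k := hsjk
        rw [qg_eval (j := s+1) (k := s+1) (r := s+1) (by omega) (by omega),
            qg_zero (j := s) (k := s+1) (r := s+1) (by omega),
            qg_zero (j := s+1) (k := s) (r := s+1) (by omega),
            qg_eval (j := s) (k := s) (r := s) (by omega) (by omega),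
            show s+1 + (s+1) - (s+1) = s+1 from by omega,
            show s + s - s = s from by omega,
            show s+1 - (s+1) = 0 from by omega,
            show s - s = 0 from by omega]
        simp only [Nat.factorial_zero, Nat.cast_one, mul_one]
        rw [div_self (by positivity), div_self (by positivity)]
        ring
      · rw [qg_zero (by omega), qg_zero (by omega), qg_zero (by omega), qg_zero (by omega)]
        ring

lemma qshuffles_cons {A : Type*} [Add A] (a b : A) (u v : List A) :
    Multiset.card (qshuffles (a :: u) (b :: v)) =
      Multiset.card (qshuffles u (b :: v)) + Multiset.card (qshuffles (a :: u) v) +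
        Multiset.card (qshuffles u v) := by
  rw [qshuffles]
  simp

/-- The number of quasi-shuffles, counted with multiplicity, of a list of length `j`
with a list of length `k` equals `∑_{r=0}^{min(j,k)} (j+k−r)!/(r!·(j−r)!·(k−r)!)`. -/
theorem card_qshuffles {A : Type*} [Add A] (u v : List A) :
    (Multiset.card (qshuffles u v) : ℚ) =
      ∑ r ∈ Finset.range (min u.length v.length + 1),
        ((u.length + v.length - r)! : ℚ) / ((r)! * (u.length - r)! * (v.length - r)!) := by
  suffices h : ∀ n (u v : List A), u.length + v.length = n →
      (Multiset.card (qshuffles u v) : ℚ) =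
        ∑ r ∈ Finset.range (min u.length v.length + 1),
          ((u.length + v.length - r)! : ℚ) / ((r)! * (u.length - r)! * (v.length - r)!) from
    h _ u v rfl
  intro n
  induction n using Nat.strong_induction_on with
  | _ n ih =>
    intro u v hn
    match u, v with
    | [], v =>
        simp [qshuffles, Nat.factorial_ne_zero]
    | a :: u, [] =>
        simp [qshuffles, Nat.factorial_ne_zero]
    | a :: u, b :: v =>
        simp only [List.length_cons] at hn ⊢
        rw [qshuffles_cons]
        push_cast
        rw [ih (u.length + (b :: v).length) (by simp; omega) u (b :: v) rfl,
            ih ((a :: u).length + v.length) (by simp; omega) (a :: u) v rfl,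
            ih (u.length + v.length) (by omega) u v rfl]
        simp only [List.length_cons]
        rw [← sum_qg (u.length+1) (v.length+1) (min u.length v.length + 2) (by omega),
            ← sum_qg u.length (v.length+1) (min u.length v.length + 2) (by omega),
            ← sum_qg (u.length+1) v.length (min u.length v.length + 2) (by omega),
            ← sum_qg u.length v.length (min u.length v.length + 2) (by omega)]
        have hshift : ∑ r ∈ Finset.range (min u.length v.length + 2),
            (if r = 0 then 0 else qg u.length v.length (r-1)) =
            ∑ r ∈ Finset.range (min u.length v.length + 2), qg u.length v.length r := by
          rw [Finset.sum_range_succ' _ (min u.length v.length + 1),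
            Finset.sum_range_succ (qg u.length v.length) (min u.length v.length + 1)]
          simp [qg_zero (j := u.length) (k := v.length) (r := min u.length v.length + 1)
            (by omega)]
        rw [Finset.sum_congr rfl (fun r _ => qg_rec u.length v.length r),
            Finset.sum_add_distrib, Finset.sum_add_distrib, hshift]
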